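/- The greedy spanner algorithm is correct: given a graph G, if H is a spanning subgraph of G constructed by iterating over the edges of G and adding an edge e to H whenever H ∪ {e} contains no cycle of length at most 2k, then H is a multiplicative (2k−1)-spanner of G. -/

import Mathlib

open scoped Classical in
/-- One step of the greedy spanner algorithm: add the edge `e` to `H` if doing so
creates no cycle of length at most `2k`. -/
noncomputable def greedyStep {V : Type*} (k : ℕ) (H : SimpleGraph V) (e : Sym2 V) :
    SimpleGraph V :=
  if ∀ (v : V) (p : (H ⊔ SimpleGraph.fromEdgeSet {e}).Walk v v), p.IsCycle → 2 * k < p.length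
  then H ⊔ SimpleGraph.fromEdgeSet {e} else H

/-- The greedy spanner: iterate over a list of edges, adding an edge whenever it
does not close a cycle of length at most `2k`. -/
noncomputable def greedySpanner {V : Type*} (k : ℕ) (l : List (Sym2 V)) : SimpleGraph V :=
  l.foldl (greedyStep k) ⊥

section Aux

variable {V : Type*}

lemma le_greedyStep (k : ℕ) (H : SimpleGraph V) (e : Sym2 V) : H ≤ greedyStep k H e := by
  rw [greedyStep]; split_ifs
  · exact le_sup_left
  · exact le_rfl

lemma le_foldl_greedyStep (k : ℕ) : ∀ (l : List (Sym2 V)) (H : SimpleGraph V),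
    H ≤ l.foldl (greedyStep k) H := by
  intro l
  induction l with
  | nil => intro H; exact le_rfl
  | cons e t ih =>
    intro H
    exact le_trans (le_greedyStep k H e) (ih _)

lemma greedyStep_noShort {k : ℕ} {H : SimpleGraph V} (e : Sym2 V)
    (h : ∀ (v : V) (p : H.Walk v v), p.IsCycle → 2 * k < p.length) :
    ∀ (v : V) (p : (greedyStep k H e).Walk v v), p.IsCycle → 2 * k < p.length := by
  by_cases hc : ∀ (v : V) (p : (H ⊔ SimpleGraph.fromEdgeSet {e}).Walk v v),
      p.IsCycle → 2 * k < p.length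
  · rw [greedyStep, if_pos hc]; exact hc
  · rw [greedyStep, if_neg hc]; exact h

lemma cycle_gives_short_path {k : ℕ} {H : SimpleGraph V} {x y : V} (hxy : x ≠ y) {v : V}
    (c : (H ⊔ SimpleGraph.fromEdgeSet {s(x, y)}).Walk v v) (hc : c.IsCycle)
    (hH : ∀ (v : V) (p : H.Walk v v), p.IsCycle → 2 * k < p.length)
    (hlen : c.length ≤ 2 * k) :
    H.edist x y ≤ ((2 * k - 1 : ℕ) : ℕ∞) := by
  classical
  -- any edge of the big graph other than s(x,y) is an edge of H
  have hedge : ∀ f ∈ (H ⊔ SimpleGraph.fromEdgeSet {s(x, y)}).edgeSet,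
      f ≠ s(x, y) → f ∈ H.edgeSet := by
    intro f hf hne
    rw [SimpleGraph.edgeSet_sup] at hf
    rcases hf with hf | hf
    · exact hf
    · rw [SimpleGraph.edgeSet_fromEdgeSet] at hf
      exact absurd hf.1 hne
  -- the cycle must use the edge s(x,y)
  have he : s(x, y) ∈ c.edges := by
    by_contra he
    have hsub : ∀ f ∈ c.edges, f ∈ H.edgeSet := fun f hf =>
      hedge f (c.edges_subset_edgeSet hf) (by rintro rfl; exact he hf)
    have := hH v (c.transfer H hsub) (hc.transfer hsub)
    rw [SimpleGraph.Walk.length_transfer] at this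
    omega
  have hx : x ∈ c.support := c.fst_mem_support_of_mem_edges he
  set c₁ := c.rotate x hx with hc₁def
  have hc₁ : c₁.IsCycle := hc.rotate hx
  have he₁ : s(x, y) ∈ c₁.edges := ((c.rotate_edges x hx).perm.mem_iff).mpr he
  have hlen₁ : c₁.length = c.length := by
    rw [hc₁def, SimpleGraph.Walk.rotate, SimpleGraph.Walk.length_append, Nat.add_comm,
      ← SimpleGraph.Walk.length_append, c.take_spec hx]
  have hy : y ∈ c₁.support := c₁.snd_mem_support_of_mem_edges he₁
  set t := c₁.takeUntil y hy with htdef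
  set d := c₁.dropUntil y hy with hddef
  have hspec : t.append d = c₁ := c₁.take_spec hy
  have hlensum : t.length + d.length = c₁.length := by
    rw [← SimpleGraph.Walk.length_append, hspec]
  have hedges : c₁.edges = t.edges ++ d.edges := by
    rw [← hspec, SimpleGraph.Walk.edges_append]
  have hnodup : (t.edges ++ d.edges).Nodup := by
    rw [← hedges]; exact hc₁.edges_nodup
  have hdisj := List.disjoint_of_nodup_append hnodup
  -- a walk between x and y avoiding s(x,y), of length ≤ 2k-1, gives the bound
  have main : ∀ (w : (H ⊔ SimpleGraph.fromEdgeSet {s(x, y)}).Walk x y),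
      s(x, y) ∉ w.edges → w.length ≤ 2 * k - 1 → H.edist x y ≤ ((2 * k - 1 : ℕ) : ℕ∞) := by
    intro w hw hwlen
    have hsub : ∀ f ∈ w.edges, f ∈ H.edgeSet := fun f hf =>
      hedge f (w.edges_subset_edgeSet hf) (by rintro rfl; exact hw hf)
    calc H.edist x y ≤ (w.transfer H hsub).length := SimpleGraph.edist_le _
      _ ≤ ((2 * k - 1 : ℕ) : ℕ∞) := by
          rw [SimpleGraph.Walk.length_transfer]
          exact_mod_cast hwlen
  rw [hedges, List.mem_append] at he₁
  rcases he₁ with h1 | h1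
  · -- edge is in t; use d.reverse : Walk x y
    have htpos : 0 < t.length := by
      have := List.length_pos_iff.mpr (List.ne_nil_of_mem h1)
      rwa [SimpleGraph.Walk.length_edges] at this
    refine main d.reverse ?_ ?_
    · rw [SimpleGraph.Walk.edges_reverse, List.mem_reverse]
      exact fun h => hdisj h1 h
    · rw [SimpleGraph.Walk.length_reverse]; omega
  · -- edge is in d; use t : Walk x y
    have hdpos : 0 < d.length := by
      have := List.length_pos_iff.mpr (List.ne_nil_of_mem h1)
      rwa [SimpleGraph.Walk.length_edges] at this
    refine main t (fun h => hdisj h h1) (by omega)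

lemma key_lemma {k : ℕ} (hk : 1 ≤ k) :
    ∀ (l : List (Sym2 V)) (H : SimpleGraph V),
      (∀ (v : V) (p : H.Walk v v), p.IsCycle → 2 * k < p.length) →
      ∀ x y : V, x ≠ y → s(x, y) ∈ l →
        (l.foldl (greedyStep k) H).edist x y ≤ ((2 * k - 1 : ℕ) : ℕ∞) := by
  intro l
  induction l with
  | nil => intro H _ x y _ hmem; simp at hmem
  | cons e t ih =>
    intro H hH x y hxy hmem
    rw [List.foldl_cons]
    rcases List.mem_cons.mp hmem with rfl | hmem
    · -- this is the step where s(x,y) was considered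
      have hstep : (greedyStep k H s(x, y)).edist x y ≤ ((2 * k - 1 : ℕ) : ℕ∞) := by
        by_cases hcond : ∀ (v : V)
            (p : (H ⊔ SimpleGraph.fromEdgeSet {s(x, y)}).Walk v v), p.IsCycle → 2 * k < p.length
        · rw [greedyStep, if_pos hcond]
          -- edge was added: x and y are adjacent
          have hadj : (H ⊔ SimpleGraph.fromEdgeSet {s(x, y)}).Adj x y := by
            right
            rw [SimpleGraph.fromEdgeSet_adj]
            exact ⟨rfl, hxy⟩
          calc (H ⊔ SimpleGraph.fromEdgeSet {s(x, y)}).edist x y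
              ≤ (SimpleGraph.Walk.cons hadj SimpleGraph.Walk.nil).length :=
                SimpleGraph.edist_le _
            _ = (1 : ℕ∞) := by simp
            _ ≤ ((2 * k - 1 : ℕ) : ℕ∞) := by exact_mod_cast Nat.one_le_iff_ne_zero.mpr (by omega)
        · rw [greedyStep, if_neg hcond]
          -- edge not added: short cycle exists, giving a short path in H
          push_neg at hcond
          obtain ⟨v, p, hp, hplen⟩ := hcond
          exact cycle_gives_short_path hxy p hp hH (by omega)
      calc (t.foldl (greedyStep k) (greedyStep k H s(x, y))).edist x y
          ≤ (greedyStep k H s(x, y)).edist x y :=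
            SimpleGraph.edist_anti (le_foldl_greedyStep k t _)
        _ ≤ _ := hstep
    · exact ih (greedyStep k H e) (greedyStep_noShort e hH) x y hxy hmem

lemma foldl_le {G : SimpleGraph V} (k : ℕ) :
    ∀ (l : List (Sym2 V)) (H : SimpleGraph V), H ≤ G → (∀ e ∈ l, e ∈ G.edgeSet) →
      l.foldl (greedyStep k) H ≤ G := by
  intro l
  induction l with
  | nil => intro H hH _; exact hH
  | cons e t ih =>
    intro H hH hmem
    rw [List.foldl_cons]
    refine ih _ ?_ fun f hf => hmem f (List.mem_cons_of_mem _ hf)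
    by_cases hcond : ∀ (v : V)
        (p : (H ⊔ SimpleGraph.fromEdgeSet {e}).Walk v v), p.IsCycle → 2 * k < p.length
    · rw [greedyStep, if_pos hcond]
      refine sup_le hH ?_
      intro a b hab
      rw [SimpleGraph.fromEdgeSet_adj, Set.mem_singleton_iff] at hab
      obtain ⟨rfl, _⟩ := hab
      exact (SimpleGraph.mem_edgeSet _).mp (hmem _ List.mem_cons_self)
    · rw [greedyStep, if_neg hcond]; exact hH

end Aux

/-- Correctness of the greedy spanner algorithm: running it over (a list enumerating)
the edges of `G` produces a subgraph of `G` that is a multiplicative `(2k-1)`-spanner. -/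
theorem greedySpanner_is_spanner {V : Type*} (G : SimpleGraph V) (k : ℕ) (hk : 1 ≤ k)
    (l : List (Sym2 V)) (hl : ∀ e, e ∈ l ↔ e ∈ G.edgeSet) :
    greedySpanner k l ≤ G ∧
    ∀ u v, (greedySpanner k l).edist u v ≤ ((2 * k - 1 : ℕ) : ℕ∞) * G.edist u v := by
  have hbot : ∀ (v : V) (p : (⊥ : SimpleGraph V).Walk v v), p.IsCycle → 2 * k < p.length := by
    intro v p hp
    cases p with
    | nil => exact absurd rfl hp.ne_nil
    | cons h _ => exact absurd h (by simp)
  refine ⟨foldl_le k l ⊥ bot_le fun e he => (hl e).mp he, ?_⟩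
  have hwalk : ∀ {u v : V} (p : G.Walk u v),
      (greedySpanner k l).edist u v ≤ ((2 * k - 1 : ℕ) : ℕ∞) * p.length := by
    intro u v p
    induction p with
    | nil => simp
    | @cons a b c hab q ih =>
      have hedge : (greedySpanner k l).edist a b ≤ ((2 * k - 1 : ℕ) : ℕ∞) :=
        key_lemma hk l ⊥ hbot a b hab.ne ((hl _).mpr hab)
      calc (greedySpanner k l).edist a c
          ≤ (greedySpanner k l).edist a b + (greedySpanner k l).edist b c :=
            SimpleGraph.edist_triangle
        _ ≤ ((2 * k - 1 : ℕ) : ℕ∞) + ((2 * k - 1 : ℕ) : ℕ∞) * q.length := add_le_add hedge ih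
        _ = ((2 * k - 1 : ℕ) : ℕ∞) * ((SimpleGraph.Walk.cons hab q).length : ℕ∞) := by
            rw [SimpleGraph.Walk.length_cons]
            push_cast
            ring
  intro u v
  by_cases htop : G.edist u v = ⊤
  · rw [htop, ENat.mul_top]
    · exact le_top
    · exact_mod_cast Nat.one_le_iff_ne_zero.mp (by omega)
  · obtain ⟨p, hp⟩ := SimpleGraph.exists_walk_of_edist_ne_top htop
    rw [← hp]
    exact hwalk p
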